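/- For every u ∈ ℝ and α > 0, the function s ↦ e^{αs²} − 1 is nonnegative, and for any τ > 1, q ≥ 1, ε > 0, a continuous function f : ℝ → ℝ satisfying |f(s)| ≤ C e^{4π s²} for all s and f(s)/s → 0 as s → 0 obeys the bound |f(s)·s| ≤ ε s² + C'·|s|^q·(e^{4πτ s²} − 1) for all s ∈ ℝ, for some constant C' > 0 depending on ε, q, τ. -/

import Mathlib

open Real

theorem stmt_2 (f : ℝ → ℝ) (hf : Continuous f) (C : ℝ) (hC : 0 < C)
    (hgrowth : ∀ s : ℝ, |f s| ≤ C * Real.exp (4 * π * s ^ 2))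
    (hlim : Filter.Tendsto (fun s => f s / s) (nhdsWithin 0 {0}ᶜ) (nhds 0))
    (ε q τ : ℝ) (hε : 0 < ε) (hq : 1 ≤ q) (hτ : 1 < τ) :
    (∀ u : ℝ, ∀ α : ℝ, 0 < α → 0 ≤ Real.exp (α * u ^ 2) - 1) ∧
    ∃ C' : ℝ, 0 < C' ∧ ∀ s : ℝ,
      |f s * s| ≤ ε * s ^ 2 + C' * |s| ^ q * (Real.exp (4 * π * τ * s ^ 2) - 1) := by
  have hexp : ∀ u : ℝ, ∀ α : ℝ, 0 < α → 0 ≤ Real.exp (α * u ^ 2) - 1 := by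
    intro u α hα
    have h1 : (1:ℝ) ≤ Real.exp (α * u ^ 2) := by
      rw [← Real.exp_zero]
      exact Real.exp_le_exp.mpr (by positivity)
    linarith
  refine ⟨hexp, ?_⟩
  obtain ⟨δ, hδ, hδ'⟩ := Metric.tendsto_nhdsWithin_nhds.mp hlim ε hε
  have hπ : (0:ℝ) < π := Real.pi_pos
  set m : ℝ := (min δ 1) ^ (q - 1) with hm_def
  have hmin : 0 < min δ 1 := lt_min hδ one_pos
  have hm : 0 < m := Real.rpow_pos_of_pos hmin _
  set c : ℝ := 1 - Real.exp (-(4 * π * τ * δ ^ 2)) with hc_def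
  have hc : 0 < c := by
    have : Real.exp (-(4 * π * τ * δ ^ 2)) < 1 := by
      rw [Real.exp_lt_one_iff]
      have : 0 < 4 * π * τ * δ ^ 2 := by positivity
      linarith
    simp only [hc_def]; linarith
  refine ⟨C / (m * c), by positivity, ?_⟩
  intro s
  rcases eq_or_ne s 0 with rfl | hs
  · simp
  · have habs : 0 < |s| := abs_pos.mpr hs
    rcases lt_or_ge (|s|) δ with hlt | hge
    · -- small s
      have := hδ' (show s ∈ ({0}ᶜ : Set ℝ) from hs) (by simpa [Real.dist_eq] using hlt)
      rw [Real.dist_0_eq_abs] at this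
      have h1 : |f s * s| ≤ ε * s ^ 2 := by
        have : |f s * s| = |f s / s| * s ^ 2 := by
          rw [abs_mul, abs_div]
          field_simp
          rw [sq_abs]
        rw [this]
        have hs2 : (0:ℝ) ≤ s ^ 2 := sq_nonneg s
        nlinarith [abs_nonneg (f s / s)]
      have h2 : 0 ≤ C / (m * c) * |s| ^ q * (Real.exp (4 * π * τ * s ^ 2) - 1) := by
        have := hexp s (4 * π * τ) (by positivity)
        have hq0 : (0:ℝ) ≤ |s| ^ q := Real.rpow_nonneg (abs_nonneg s) q
        have : (0:ℝ) ≤ C / (m * c) := by positivity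
        positivity
      linarith
    · -- large s
      have hE : c * Real.exp (4 * π * s ^ 2) ≤ Real.exp (4 * π * τ * s ^ 2) - 1 := by
      -- exp(A τ s²) - 1 = exp(Aτs²)(1 - exp(-Aτs²)) ≥ exp(Aτs²)·c ≥ exp(As²)·c
        have hs2 : δ ^ 2 ≤ s ^ 2 := by
          have := sq_abs s
          nlinarith
        have h1 : Real.exp (-(4 * π * τ * s ^ 2)) ≤ Real.exp (-(4 * π * τ * δ ^ 2)) := by
          apply Real.exp_le_exp.mpr
          have h := mul_le_mul_of_nonneg_left hs2 (show (0:ℝ) ≤ 4 * π * τ by positivity)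
          nlinarith [h]
        have h2 : Real.exp (4 * π * s ^ 2) ≤ Real.exp (4 * π * τ * s ^ 2) := by
          apply Real.exp_le_exp.mpr
          have h := mul_le_mul_of_nonneg_right hτ.le (show (0:ℝ) ≤ 4 * π * s ^ 2 by positivity)
          nlinarith [h]
        have h3 : Real.exp (4 * π * τ * s ^ 2) * Real.exp (-(4 * π * τ * s ^ 2)) = 1 := by
          rw [← Real.exp_add]; simp
        have hEpos : 0 < Real.exp (4 * π * τ * s ^ 2) := Real.exp_pos _
        have hEpos2 : 0 < Real.exp (4 * π * s ^ 2) := Real.exp_pos _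
        simp only [hc_def]
        nlinarith
      have hSq : m * |s| ≤ |s| ^ q := by
        have h1 : m ≤ |s| ^ (q - 1) := by
          apply Real.rpow_le_rpow (le_of_lt hmin) (le_trans (min_le_left _ _) hge)
          linarith
        have h2 : |s| ^ q = |s| ^ (q - 1) * |s| := by
          nth_rewrite 1 [show q = (q - 1) + 1 by ring]
          rw [Real.rpow_add_one habs.ne']
        rw [h2]
        nlinarith
      have hfs : |f s * s| ≤ C * Real.exp (4 * π * s ^ 2) * |s| := by
        rw [abs_mul]
        exact mul_le_mul_of_nonneg_right (hgrowth s) (abs_nonneg s)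
      have key : C * Real.exp (4 * π * s ^ 2) * |s| ≤
          C / (m * c) * |s| ^ q * (Real.exp (4 * π * τ * s ^ 2) - 1) := by
        have h1 : C / (m * c) * (m * |s|) * (c * Real.exp (4 * π * s ^ 2)) =
            C * Real.exp (4 * π * s ^ 2) * |s| := by
          field_simp
        rw [← h1]
        have hA : 0 ≤ C / (m * c) := by positivity
        have hB : 0 ≤ m * |s| := by positivity
        have hCc : 0 ≤ c * Real.exp (4 * π * s ^ 2) := by positivity
        have := mul_le_mul (mul_le_mul_of_nonneg_left hSq hA) hE hCc
          (by positivity : (0:ℝ) ≤ C / (m * c) * |s| ^ q)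
        linarith
      have hs2 : (0:ℝ) ≤ ε * s ^ 2 := by positivity
      linarith
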